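/- Fix γ > 0 and a distribution F₀ on [0,∞) with F₀ ∈ OS and ∫₀^∞ F̄₀(y)dy = ∞, and define F_γ by F̄_γ(x) = e^{-γx}F̄₀(x) for x ≥ 0. Then (F_γ^{*2})̄(x) ~ γ e^{-γx} ∫₀ˣ F̄₀(x-y)F̄₀(y) dy as x → ∞. -/

import Mathlib

open MeasureTheory Filter Set Asymptotics

/-- The tail `F̄(x) = μ((x,∞))` of a distribution `μ` on `ℝ`. -/
noncomputable def tail (μ : MeasureTheory.Measure ℝ) (x : ℝ) : ℝ := (μ (Set.Ioi x)).toReal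

/-- Convolution of two distributions on `ℝ`. -/
noncomputable def mconv (μ ν : MeasureTheory.Measure ℝ) : MeasureTheory.Measure ℝ :=
  MeasureTheory.Measure.map (fun p : ℝ × ℝ => p.1 + p.2) (μ.prod ν)

/-- `iconv μ k` is the `k`-fold convolution `μ^{*k}` (with `μ^{*0} = δ₀`). -/
noncomputable def iconv (μ : MeasureTheory.Measure ℝ) : ℕ → MeasureTheory.Measure ℝ
  | 0 => MeasureTheory.Measure.dirac 0
  | n + 1 => mconv (iconv μ n) μ

/-- The class `L(γ)`: `F̄(x-t) ~ e^{γt} F̄(x)` as `x → ∞`, for every `t`. -/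
def MemL (γ : ℝ) (μ : MeasureTheory.Measure ℝ) : Prop :=
  ∀ t : ℝ, Filter.Tendsto (fun x => tail μ (x - t) / tail μ x) Filter.atTop
    (nhds (Real.exp (γ * t)))

/-- The class `OS`: `limsup_{x→∞} (F*F)̄(x) / F̄(x) < ∞`. -/
def MemOS (μ : MeasureTheory.Measure ℝ) : Prop :=
  Filter.IsBoundedUnder (· ≤ ·) Filter.atTop (fun x => tail (mconv μ μ) x / tail μ x)

lemma measurable_tailIoi (μ : Measure ℝ) (x : ℝ) : Measurable fun y => μ (Ioi (x - y)) :=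
  Monotone.measurable (fun _ _ hab => measure_mono (Ioi_subset_Ioi (by linarith)))

noncomputable def expM (γ : ℝ) : Measure ℝ :=
  (volume.restrict (Ioi (0:ℝ))).withDensity fun t => ENNReal.ofReal (γ * Real.exp (-(γ * t)))

lemma exp_integral {γ : ℝ} (hγ : 0 < γ) (t : ℝ) :
    ∫ s in Ioi t, γ * Real.exp (-(γ * s)) = Real.exp (-(γ * t)) := by
  have h := integral_comp_mul_left_Ioi (fun u => Real.exp (-u)) t hγ
  simp only [smul_eq_mul] at h
  rw [integral_const_mul, h, integral_exp_neg_Ioi]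
  field_simp

lemma exp_intble {γ : ℝ} (hγ : 0 < γ) (t : ℝ) :
    IntegrableOn (fun s => γ * Real.exp (-(γ * s))) (Ioi t) := by
  apply Integrable.const_mul
  have h : (fun s => Real.exp (-(γ * s))) = fun s => Real.exp (-γ * s) := by
    ext s; ring_nf
  rw [h]
  exact exp_neg_integrableOn_Ioi t hγ


lemma expM_Ioi {γ : ℝ} (hγ : 0 < γ) {t : ℝ} (ht : 0 ≤ t) :
    expM γ (Ioi t) = ENNReal.ofReal (Real.exp (-(γ * t))) := by
  rw [expM, withDensity_apply _ measurableSet_Ioi,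
    Measure.restrict_restrict measurableSet_Ioi]
  have h1 : Ioi t ∩ Ioi (0:ℝ) = Ioi t := by
    rw [inter_eq_left]; exact Ioi_subset_Ioi ht
  rw [h1, ← ofReal_integral_eq_lintegral_ofReal (exp_intble hγ t)
    (Filter.Eventually.of_forall fun s => by positivity), exp_integral hγ t]



lemma expM_Iic0 (γ : ℝ) : expM γ (Iic 0) = 0 := by
  rw [expM, withDensity_apply _ measurableSet_Iic, Measure.restrict_restrict measurableSet_Iic]
  have : Iic (0:ℝ) ∩ Ioi 0 = ∅ := by
    ext s; simp only [mem_inter_iff, mem_Iic, mem_Ioi, mem_empty_iff_false, iff_false]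
    rintro ⟨h1, h2⟩; linarith
  rw [this]; simp

lemma expM_singleton (γ : ℝ) (t : ℝ) : expM γ {t} = 0 := by
  rw [expM, withDensity_apply _ (measurableSet_singleton t)]
  apply setLIntegral_measure_zero
  rw [Measure.restrict_apply (measurableSet_singleton t)]
  exact le_antisymm ((measure_mono inter_subset_left).trans (by simp)) zero_le

lemma expM_Ici {γ : ℝ} (hγ : 0 < γ) {t : ℝ} (ht : 0 ≤ t) :
    expM γ (Ici t) = ENNReal.ofReal (Real.exp (-(γ * t))) := by
  refine le_antisymm ?_ ?_
  · rw [← expM_Ioi hγ ht, ← Ioi_union_left]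
    exact (measure_union_le _ _).trans (by rw [expM_singleton]; simp)
  · rw [← expM_Ioi hγ ht]; exact measure_mono Ioi_subset_Ici_self

lemma expM_prob (γ : ℝ) (hγ : 0 < γ) : IsProbabilityMeasure (expM γ) := by
  constructor
  have : (univ : Set ℝ) = Iic 0 ∪ Ioi 0 := by simp
  rw [this, measure_union (Iic_disjoint_Ioi le_rfl) measurableSet_Ioi, expM_Iic0,
    expM_Ioi hγ le_rfl]
  simp

noncomputable def nuM (γ : ℝ) (F0 : Measure ℝ) : Measure ℝ :=
  Measure.map (fun p : ℝ × ℝ => min p.1 p.2) (F0.prod (expM γ))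

lemma nuM_Ioi {γ : ℝ} (hγ : 0 < γ) (F0 : Measure ℝ) [IsProbabilityMeasure F0] {t : ℝ}
    (ht : 0 ≤ t) : nuM γ F0 (Ioi t) = F0 (Ioi t) * ENNReal.ofReal (Real.exp (-(γ * t))) := by
  haveI := expM_prob γ hγ
  rw [nuM, Measure.map_apply (measurable_fst.min measurable_snd) measurableSet_Ioi]
  have : (fun p : ℝ × ℝ => min p.1 p.2) ⁻¹' Ioi t = Ioi t ×ˢ Ioi t := by
    ext p; simp [lt_min_iff]
  rw [this, Measure.prod_prod, expM_Ioi hγ ht]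

lemma nuM_prob {γ : ℝ} (hγ : 0 < γ) (F0 : Measure ℝ) [IsProbabilityMeasure F0] :
    IsProbabilityMeasure (nuM γ F0) := by
  haveI := expM_prob γ hγ
  exact Measure.isProbabilityMeasure_map (measurable_fst.min measurable_snd).aemeasurable

lemma mconv_Ioi (μ ν : Measure ℝ) [SFinite ν] (x : ℝ) :
    mconv μ ν (Ioi x) = ∫⁻ y, ν (Ioi (x - y)) ∂μ := by
  rw [mconv, Measure.map_apply measurable_add measurableSet_Ioi, Measure.prod_apply
    (measurable_add (measurableSet_Ioi : MeasurableSet (Ioi x)))]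
  congr 1; ext y; congr 1; ext z
  simp only [mem_preimage, mem_Ioi]
  constructor <;> intro h <;> linarith

lemma tail_ofReal (μ : Measure ℝ) [IsFiniteMeasure μ] (x : ℝ) :
    μ (Ioi x) = ENNReal.ofReal (tail μ x) :=
  (ENNReal.ofReal_toReal (measure_ne_top μ _)).symm

lemma tail_anti (μ : Measure ℝ) [IsFiniteMeasure μ] : Antitone (tail μ) :=
  fun a b hab => ENNReal.toReal_mono (measure_ne_top μ _) (measure_mono (Ioi_subset_Ioi hab))

lemma tail_nonneg (μ : Measure ℝ) (x : ℝ) : 0 ≤ tail μ x := ENNReal.toReal_nonneg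

lemma tail_le_one (μ : Measure ℝ) [IsProbabilityMeasure μ] (x : ℝ) : tail μ x ≤ 1 := by
  rw [tail, ← ENNReal.toReal_one]
  exact ENNReal.toReal_mono (by simp) prob_le_one

lemma core_sandwich (μ : Measure ℝ) [IsProbabilityMeasure μ] {x : ℝ} (hx : 0 ≤ x) :
    (∫⁻ y in Ioi 0, μ (Ioi (x - y) ∩ Ioi 0) ∂μ) ≤ (∫⁻ y, μ (Ioi (x - y)) ∂μ) ∧
    (∫⁻ y, μ (Ioi (x - y)) ∂μ) ≤
      (∫⁻ y in Ioi 0, μ (Ioi (x - y) ∩ Ioi 0) ∂μ) + 2 * μ (Ioi x) := by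
  have hm1 : Measurable fun y => μ (Ioi (x - y) ∩ Ioi 0) := by
    have : ∀ y, μ (Ioi (x - y) ∩ Ioi 0) = μ.restrict (Ioi 0) (Ioi (x - y)) := fun y =>
      (Measure.restrict_apply measurableSet_Ioi).symm
    simp only [this]; exact measurable_tailIoi _ x
  have hm2 : Measurable fun y => μ (Ioi (x - y) \ Ioi 0) := by
    have : ∀ y, μ (Ioi (x - y) \ Ioi 0) = μ.restrict (Ioi 0)ᶜ (Ioi (x - y)) := fun y => by
      rw [Measure.restrict_apply measurableSet_Ioi, diff_eq]
    simp only [this]; exact measurable_tailIoi _ x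
  constructor
  · refine le_trans ?_ (setLIntegral_le_lintegral (Ioi 0) _)
    exact lintegral_mono fun y => measure_mono inter_subset_left
  · have hsplit : (∫⁻ y, μ (Ioi (x - y)) ∂μ) =
        (∫⁻ y in Ioi 0, μ (Ioi (x - y)) ∂μ) + ∫⁻ y in Iic 0, μ (Ioi (x - y)) ∂μ := by
      rw [← compl_Ioi, lintegral_add_compl _ measurableSet_Ioi]
    have hE1 : (∫⁻ y in Iic 0, μ (Ioi (x - y)) ∂μ) ≤ μ (Ioi x) := by
      calc (∫⁻ y in Iic 0, μ (Ioi (x - y)) ∂μ) ≤ ∫⁻ _ in Iic 0, μ (Ioi x) ∂μ := by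
            refine setLIntegral_mono measurable_const fun y hy => ?_
            exact measure_mono (Ioi_subset_Ioi (by simp only [mem_Iic] at hy; linarith))
        _ = μ (Ioi x) * μ (Iic 0) := by rw [setLIntegral_const]
        _ ≤ μ (Ioi x) * 1 := mul_le_mul_right prob_le_one _
        _ = μ (Ioi x) := mul_one _
    have hinner : (∫⁻ y in Ioi 0, μ (Ioi (x - y)) ∂μ) =
        (∫⁻ y in Ioi 0, μ (Ioi (x - y) ∩ Ioi 0) ∂μ) + ∫⁻ y in Ioi 0, μ (Ioi (x - y) \ Ioi 0) ∂μ := by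
      rw [← lintegral_add_left hm1]
      refine setLIntegral_congr_fun measurableSet_Ioi fun y _ => ?_
      exact (measure_inter_add_diff _ measurableSet_Ioi).symm
    have hE2 : (∫⁻ y in Ioi 0, μ (Ioi (x - y) \ Ioi 0) ∂μ) ≤ μ (Ioi x) := by
      calc (∫⁻ y in Ioi 0, μ (Ioi (x - y) \ Ioi 0) ∂μ)
          ≤ ∫⁻ y, (Ioi x).indicator (fun _ => 1) y ∂μ := by
            refine (setLIntegral_le_lintegral _ _).trans (lintegral_mono fun y => ?_)
            by_cases hy : y ≤ x
            · have : Ioi (x - y) \ Ioi 0 = ∅ := by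
                ext z; simp only [mem_diff, mem_Ioi, mem_empty_iff_false, iff_false, not_and,
                  not_not]
                intro hz; linarith
              rw [this]; simp
            · rw [indicator_of_mem (by simpa using lt_of_not_ge hy)]
              exact prob_le_one
        _ = μ (Ioi x) := by rw [lintegral_indicator measurableSet_Ioi]; simp
    rw [hsplit, hinner]
    calc (∫⁻ y in Ioi 0, μ (Ioi (x - y) ∩ Ioi 0) ∂μ) + (∫⁻ y in Ioi 0, μ (Ioi (x - y) \ Ioi 0) ∂μ)
          + ∫⁻ y in Iic 0, μ (Ioi (x - y)) ∂μ
        ≤ (∫⁻ y in Ioi 0, μ (Ioi (x - y) ∩ Ioi 0) ∂μ) + μ (Ioi x) + μ (Ioi x) :=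
          add_le_add (add_le_add le_rfl hE2) hE1
      _ = (∫⁻ y in Ioi 0, μ (Ioi (x - y) ∩ Ioi 0) ∂μ) + 2 * μ (Ioi x) := by
          rw [two_mul, add_assoc]

lemma restrict_eq_of_tail (F G : Measure ℝ) [IsProbabilityMeasure F] [IsProbabilityMeasure G]
    (h : ∀ t : ℝ, 0 ≤ t → F (Ioi t) = G (Ioi t)) :
    F.restrict (Ioi 0) = G.restrict (Ioi 0) := by
  refine Measure.ext_of_Iic _ _ fun a => ?_
  rw [Measure.restrict_apply measurableSet_Iic, Measure.restrict_apply measurableSet_Iic]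
  have hIoc : Iic a ∩ Ioi (0:ℝ) = Ioc 0 a := by ext z; simp [mem_Ioc, and_comm]
  rw [hIoc]
  rcases le_or_gt a 0 with ha | ha
  · rw [Ioc_eq_empty (by simp only [not_lt]; exact ha)]; simp
  · have hd : Ioc (0:ℝ) a = Ioi 0 \ Ioi a := by
      ext z; simp only [mem_Ioc, mem_diff, mem_Ioi, not_lt]
    rw [hd, measure_diff (Ioi_subset_Ioi ha.le) measurableSet_Ioi.nullMeasurableSet
      (measure_ne_top F _), measure_diff (Ioi_subset_Ioi ha.le) measurableSet_Ioi.nullMeasurableSet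
      (measure_ne_top G _), h 0 le_rfl, h a ha.le]

lemma F0_Ioi_neg {F0 : Measure ℝ} [IsProbabilityMeasure F0] (hs : F0 (Iio 0) = 0) {z : ℝ}
    (hz : z < 0) : F0 (Ioi z) = 1 := by
  refine le_antisymm prob_le_one ?_
  have h1 : F0 (Iio 0)ᶜ = 1 := by
    rw [measure_compl measurableSet_Iio (measure_ne_top _ _), hs, measure_univ]; simp
  rw [← h1, compl_Iio]
  exact measure_mono fun z' hz' => lt_of_lt_of_le hz hz'

noncomputable def Gfun (γ : ℝ) (F0 : Measure ℝ) (x : ℝ) : ENNReal :=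
  ∫⁻ e in Ioc 0 x, nuM γ F0 (Ioi (x - e)) * F0 (Ioi e) ∂(expM γ)

lemma nuM_conv_sandwich {γ : ℝ} (hγ : 0 < γ) (F0 : Measure ℝ) [IsProbabilityMeasure F0]
    (hs : F0 (Iio 0) = 0) {x : ℝ} (hx : 0 ≤ x) :
    Gfun γ F0 x ≤ (∫⁻ y, nuM γ F0 (Ioi (x - y)) ∂(nuM γ F0)) ∧
      (∫⁻ y, nuM γ F0 (Ioi (x - y)) ∂(nuM γ F0)) ≤ Gfun γ F0 x +
        ENNReal.ofReal (Real.exp (-(γ * x))) * (mconv F0 F0 (Ioi x) + F0 (Ioi x)) := by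
  haveI := expM_prob γ hγ
  haveI := nuM_prob hγ F0
  set ν := nuM γ F0 with hν
  set E := expM γ with hE
  set P := F0.prod E with hP
  -- the functions
  set f : ℝ × ℝ → ENNReal := fun p => ν (Ioi (x - min p.1 p.2)) with hf
  set g : ℝ × ℝ → ENNReal := fun p =>
    (Ioc 0 x).indicator (fun e => ν (Ioi (x - e))) p.2 * (Ioi p.2).indicator 1 p.1 with hg
  set h₁ : ℝ × ℝ → ENNReal := fun p => ν (Ioi (x - p.1)) * (Ici p.1).indicator 1 p.2 with hh₁
  set h₂ : ℝ × ℝ → ENNReal := fun p => (Ioi x).indicator 1 p.2 * (Ioi p.2).indicator 1 p.1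
    with hh₂
  -- measurability
  have mνe : Measurable fun e : ℝ => ν (Ioi (x - e)) := measurable_tailIoi ν x
  have mlt : MeasurableSet {p : ℝ × ℝ | p.2 < p.1} := measurableSet_lt measurable_snd measurable_fst
  have mle : MeasurableSet {p : ℝ × ℝ | p.1 ≤ p.2} := measurableSet_le measurable_fst measurable_snd
  have hgind : ∀ p : ℝ × ℝ, g p = {q : ℝ × ℝ | q.2 < q.1}.indicator
      (fun q => (Ioc 0 x).indicator (fun e => ν (Ioi (x - e))) q.2) p := by
    intro p
    simp only [hg, Set.indicator_apply, mem_Ioi, mem_setOf_eq]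
    by_cases hp : p.2 < p.1 <;> simp [hp]
  have mg : Measurable g := by
    rw [funext hgind]
    exact Measurable.indicator ((mνe.indicator measurableSet_Ioc).comp measurable_snd) mlt
  have mf : Measurable f := (measurable_tailIoi ν x).comp (measurable_fst.min measurable_snd)
  have hh₁ind : ∀ p : ℝ × ℝ, h₁ p = {q : ℝ × ℝ | q.1 ≤ q.2}.indicator
      (fun q => ν (Ioi (x - q.1))) p := by
    intro p
    simp only [hh₁, Set.indicator_apply, mem_Ici, mem_setOf_eq]
    by_cases hp : p.1 ≤ p.2 <;> simp [hp]
  have mh₁ : Measurable h₁ := by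
    rw [funext hh₁ind]
    exact Measurable.indicator (mνe.comp measurable_fst) mle
  have hh₂ind : ∀ p : ℝ × ℝ, h₂ p = ({q : ℝ × ℝ | x < q.2} ∩ {q | q.2 < q.1}).indicator 1 p := by
    intro p
    simp only [hh₂, Set.indicator_apply, mem_Ioi, mem_inter_iff, mem_setOf_eq]
    by_cases hp1 : x < p.2 <;> by_cases hp2 : p.2 < p.1 <;> simp [hp1, hp2]
  have mh₂ : Measurable h₂ := by
    rw [funext hh₂ind]
    exact Measurable.indicator measurable_one ((measurable_snd measurableSet_Ioi).inter mlt)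
  -- T_ν as integral over P
  have hTν : (∫⁻ y, ν (Ioi (x - y)) ∂ν) = ∫⁻ p, f p ∂P :=
    lintegral_map mνe (measurable_fst.min measurable_snd)
  have hG : (∫⁻ p, g p ∂P) = Gfun γ F0 x := by
    rw [hP, lintegral_prod_symm g mg.aemeasurable]
    have hinner : ∀ e : ℝ, (∫⁻ X, g (X, e) ∂F0) =
        (Ioc 0 x).indicator (fun e' => ν (Ioi (x - e')) * F0 (Ioi e')) e := by
      intro e
      have hge : ∀ X, g (X, e) = (Ioc 0 x).indicator (fun e' => ν (Ioi (x - e'))) e *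
          (Ioi e).indicator 1 X := fun X => rfl
      simp only [hge]
      rw [lintegral_const_mul _ (measurable_one.indicator measurableSet_Ioi),
        lintegral_indicator_one measurableSet_Ioi]
      by_cases he : e ∈ Ioc 0 x
      · rw [indicator_of_mem he, indicator_of_mem he]
      · rw [indicator_of_notMem he, indicator_of_notMem he, zero_mul]
    simp only [hinner]
    rw [lintegral_indicator measurableSet_Ioc]
    rfl
  have hH₁ : (∫⁻ p, h₁ p ∂P) ≤ ENNReal.ofReal (Real.exp (-(γ * x))) * mconv F0 F0 (Ioi x) := by
    rw [hP, lintegral_prod h₁ mh₁.aemeasurable]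
    have hinner : ∀ X : ℝ, (∫⁻ e, h₁ (X, e) ∂E) = ν (Ioi (x - X)) * E (Ici X) := by
      intro X
      have hX : ∀ e, h₁ (X, e) = ν (Ioi (x - X)) * (Ici X).indicator 1 e := fun e => rfl
      simp only [hX]
      rw [lintegral_const_mul _ (measurable_one.indicator measurableSet_Ici),
        lintegral_indicator_one measurableSet_Ici]
    simp only [hinner]
    have hae : ∀ᵐ X ∂F0, 0 ≤ X := by
      rw [ae_iff]
      have : {a : ℝ | ¬ 0 ≤ a} = Iio 0 := by ext a; simp [not_le]
      rw [this]; exact hs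
    have hbd : ∀ᵐ X ∂F0, ν (Ioi (x - X)) * E (Ici X) ≤
        ENNReal.ofReal (Real.exp (-(γ * x))) * F0 (Ioi (x - X)) := by
      filter_upwards [hae] with X hX
      rw [hE, expM_Ici hγ hX]
      rcases le_or_gt X x with hXx | hXx
      · rw [hν, nuM_Ioi hγ F0 (by linarith), mul_assoc,
          ← ENNReal.ofReal_mul (Real.exp_nonneg _), ← Real.exp_add,
          mul_comm (ENNReal.ofReal _) (F0 (Ioi (x - X)))]
        apply le_of_eq
        congr 2
        ring_nf
      · have h1 : F0 (Ioi (x - X)) = 1 := F0_Ioi_neg hs (by linarith)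
        rw [h1, mul_one]
        calc ν (Ioi (x - X)) * ENNReal.ofReal (Real.exp (-(γ * X)))
            ≤ 1 * ENNReal.ofReal (Real.exp (-(γ * X))) := mul_le_mul_left prob_le_one _
          _ ≤ ENNReal.ofReal (Real.exp (-(γ * x))) := by
              rw [one_mul]
              exact ENNReal.ofReal_le_ofReal (Real.exp_le_exp.2 (by nlinarith))
    calc (∫⁻ X, ν (Ioi (x - X)) * E (Ici X) ∂F0)
        ≤ ∫⁻ X, ENNReal.ofReal (Real.exp (-(γ * x))) * F0 (Ioi (x - X)) ∂F0 :=
          lintegral_mono_ae hbd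
      _ = ENNReal.ofReal (Real.exp (-(γ * x))) * mconv F0 F0 (Ioi x) := by
          rw [lintegral_const_mul _ (measurable_tailIoi F0 x), mconv_Ioi]
  have hH₂ : (∫⁻ p, h₂ p ∂P) ≤ ENNReal.ofReal (Real.exp (-(γ * x))) * F0 (Ioi x) := by
    rw [hP, lintegral_prod_symm h₂ mh₂.aemeasurable]
    have hinner : ∀ e : ℝ, (∫⁻ X, h₂ (X, e) ∂F0) = (Ioi x).indicator 1 e * F0 (Ioi e) := by
      intro e
      have he' : ∀ X, h₂ (X, e) = (Ioi x).indicator 1 e * (Ioi e).indicator 1 X := fun X => rfl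
      simp only [he']
      rw [lintegral_const_mul _ (measurable_one.indicator measurableSet_Ioi),
        lintegral_indicator_one measurableSet_Ioi]
    simp only [hinner]
    calc (∫⁻ e, (Ioi x).indicator 1 e * F0 (Ioi e) ∂E)
        ≤ ∫⁻ e, (Ioi x).indicator (fun _ => F0 (Ioi x)) e ∂E := by
          refine lintegral_mono fun e => ?_
          by_cases he : e ∈ Ioi x
          · rw [indicator_of_mem he, indicator_of_mem he, Pi.one_apply, one_mul]
            exact measure_mono (Ioi_subset_Ioi (le_of_lt he))
          · rw [indicator_of_notMem he, indicator_of_notMem he, zero_mul]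
      _ = F0 (Ioi x) * E (Ioi x) := by
          rw [lintegral_indicator_const measurableSet_Ioi, mul_comm]
      _ = ENNReal.ofReal (Real.exp (-(γ * x))) * F0 (Ioi x) := by
          rw [hE, expM_Ioi hγ hx, mul_comm]
  have hglef : ∀ p : ℝ × ℝ, g p ≤ f p := by
    intro p
    by_cases h1 : p.2 ∈ Ioc 0 x
    · by_cases h2 : p.1 ∈ Ioi p.2
      · show (Ioc 0 x).indicator _ p.2 * (Ioi p.2).indicator 1 p.1 ≤ ν (Ioi (x - min p.1 p.2))
        rw [indicator_of_mem h1, indicator_of_mem h2, Pi.one_apply, mul_one,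
          min_eq_right (le_of_lt (mem_Ioi.1 h2))]
      · show (Ioc 0 x).indicator _ p.2 * (Ioi p.2).indicator 1 p.1 ≤ ν (Ioi (x - min p.1 p.2))
        rw [indicator_of_notMem h2, mul_zero]
        exact zero_le
    · show (Ioc 0 x).indicator _ p.2 * (Ioi p.2).indicator 1 p.1 ≤ ν (Ioi (x - min p.1 p.2))
      rw [indicator_of_notMem h1, zero_mul]
      exact zero_le
  have haeP : ∀ᵐ p ∂P, 0 < p.2 := by
    rw [hP, ae_iff]
    have hset : {p : ℝ × ℝ | ¬ 0 < p.2} = (univ : Set ℝ) ×ˢ Iic 0 := by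
      ext p; simp [not_lt]
    rw [hset, Measure.prod_prod, hE, expM_Iic0, mul_zero]
  have hfle : ∀ᵐ p ∂P, f p ≤ g p + h₁ p + h₂ p := by
    filter_upwards [haeP] with p hp2
    show ν (Ioi (x - min p.1 p.2)) ≤ _
    rcases le_or_gt p.1 p.2 with hc | hc
    · have : h₁ p = ν (Ioi (x - p.1)) := by
        show ν (Ioi (x - p.1)) * (Ici p.1).indicator 1 p.2 = _
        rw [indicator_of_mem (mem_Ici.2 hc), Pi.one_apply, mul_one]
      rw [min_eq_left hc]
      calc ν (Ioi (x - p.1)) = h₁ p := this.symm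
        _ ≤ g p + h₁ p := le_add_self
        _ ≤ g p + h₁ p + h₂ p := le_self_add
    · rw [min_eq_right hc.le]
      rcases le_or_gt p.2 x with hd | hd
      · have : g p = ν (Ioi (x - p.2)) := by
          show (Ioc 0 x).indicator _ p.2 * (Ioi p.2).indicator 1 p.1 = _
          rw [indicator_of_mem (mem_Ioc.2 ⟨hp2, hd⟩), indicator_of_mem (mem_Ioi.2 hc),
            Pi.one_apply, mul_one]
        calc ν (Ioi (x - p.2)) = g p := this.symm
          _ ≤ g p + h₁ p := le_self_add
          _ ≤ g p + h₁ p + h₂ p := le_self_add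
      · have : h₂ p = 1 := by
          show (Ioi x).indicator 1 p.2 * (Ioi p.2).indicator 1 p.1 = 1
          rw [indicator_of_mem (mem_Ioi.2 hd), indicator_of_mem (mem_Ioi.2 hc)]
          simp
        calc ν (Ioi (x - p.2)) ≤ 1 := prob_le_one
          _ = h₂ p := this.symm
          _ ≤ g p + h₁ p + h₂ p := le_add_self
  constructor
  · rw [hTν, ← hG]
    exact lintegral_mono hglef
  · rw [hTν]
    calc (∫⁻ p, f p ∂P) ≤ ∫⁻ p, (g p + h₁ p + h₂ p) ∂P := lintegral_mono_ae hfle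
      _ = (∫⁻ p, g p ∂P) + (∫⁻ p, h₁ p ∂P) + ∫⁻ p, h₂ p ∂P := by
          rw [lintegral_add_left (f := fun p => g p + h₁ p) (mg.add mh₁), lintegral_add_left mg]
      _ ≤ Gfun γ F0 x + ENNReal.ofReal (Real.exp (-(γ * x))) * mconv F0 F0 (Ioi x)
          + ENNReal.ofReal (Real.exp (-(γ * x))) * F0 (Ioi x) :=
          add_le_add (add_le_add hG.le hH₁) hH₂
      _ = Gfun γ F0 x + ENNReal.ofReal (Real.exp (-(γ * x))) *
          (mconv F0 F0 (Ioi x) + F0 (Ioi x)) := by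
          rw [mul_add, add_assoc]

lemma measurable_tail_shift (F0 : Measure ℝ) [IsFiniteMeasure F0] (x : ℝ) :
    Measurable fun y => tail F0 (x - y) :=
  Monotone.measurable fun a b hab => tail_anti F0 (by linarith)

lemma integrable_tail_prod (F0 : Measure ℝ) [IsProbabilityMeasure F0] (x : ℝ) :
    Integrable (fun y => tail F0 (x - y) * tail F0 y) (volume.restrict (Ioc 0 x)) := by
  refine Integrable.mono' (integrable_const 1)
    ((measurable_tail_shift F0 x).mul (tail_anti F0).measurable).aestronglyMeasurable
    (Filter.Eventually.of_forall fun y => ?_)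
  rw [Real.norm_eq_abs, abs_of_nonneg (mul_nonneg (tail_nonneg _ _) (tail_nonneg _ _))]
  calc tail F0 (x - y) * tail F0 y ≤ 1 * 1 :=
    mul_le_mul (tail_le_one F0 _) (tail_le_one F0 _) (tail_nonneg _ _) zero_le_one
  _ = 1 := mul_one 1

lemma Gfun_eq {γ : ℝ} (hγ : 0 < γ) (F0 : Measure ℝ) [IsProbabilityMeasure F0] {x : ℝ}
    (hx : 0 ≤ x) : Gfun γ F0 x =
    ENNReal.ofReal (γ * Real.exp (-(γ * x)) * ∫ y in Ioc 0 x, tail F0 (x - y) * tail F0 y) := by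
  have hmd : Measurable fun t : ℝ => ENNReal.ofReal (γ * Real.exp (-(γ * t))) := by
    apply Measurable.ennreal_ofReal
    exact (measurable_const.mul (Real.measurable_exp.comp (measurable_id.const_mul γ).neg))
  have hmf : Measurable fun e => nuM γ F0 (Ioi (x - e)) * F0 (Ioi e) := by
    refine (measurable_tailIoi _ x).mul ?_
    exact Antitone.measurable fun a b hab => measure_mono (Ioi_subset_Ioi hab)
  rw [Gfun, expM, restrict_withDensity measurableSet_Ioc,
    lintegral_withDensity_eq_lintegral_mul _ hmd hmf,
    Measure.restrict_restrict measurableSet_Ioc,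
    inter_eq_left.2 (fun z hz => mem_Ioi.2 (mem_Ioc.1 hz).1)]
  have hcong : ∀ e ∈ Ioc 0 x,
      (fun a => ((fun t => ENNReal.ofReal (γ * Real.exp (-(γ * t)))) *
        fun e' => nuM γ F0 (Ioi (x - e')) * F0 (Ioi e')) a) e =
      ENNReal.ofReal (γ * Real.exp (-(γ * x)) * (tail F0 (x - e) * tail F0 e)) := by
    intro e he
    rcases mem_Ioc.1 he with ⟨he1, he2⟩
    simp only [Pi.mul_apply]
    rw [nuM_Ioi hγ F0 (by linarith), tail_ofReal F0 (x - e), tail_ofReal F0 e,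
      ← ENNReal.ofReal_mul (tail_nonneg F0 (x - e)),
      ← ENNReal.ofReal_mul (mul_nonneg (tail_nonneg F0 (x - e)) (Real.exp_nonneg _)),
      ← ENNReal.ofReal_mul (by positivity : (0:ℝ) ≤ γ * Real.exp (-(γ * e)))]
    congr 1
    rw [show -(γ*x) = -(γ*(x-e)) + -(γ*e) by ring, Real.exp_add]
    ring
  rw [setLIntegral_congr_fun measurableSet_Ioc hcong,
    ← ofReal_integral_eq_lintegral_ofReal]
  · rw [integral_const_mul]
  · exact (integrable_tail_prod F0 x).const_mul _
  · exact Filter.Eventually.of_forall fun e => mul_nonneg (by positivity)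
      (mul_nonneg (tail_nonneg _ _) (tail_nonneg _ _))

lemma integrableOn_tail (F0 : Measure ℝ) [IsProbabilityMeasure F0] (a b : ℝ) :
    IntegrableOn (tail F0) (Ioc a b) volume := by
  refine Integrable.mono' (integrable_const 1) (tail_anti F0).measurable.aestronglyMeasurable
    (Filter.Eventually.of_forall fun y => ?_)
  rw [Real.norm_eq_abs, abs_of_nonneg (tail_nonneg _ _)]
  exact tail_le_one F0 y

lemma key_bound {γ : ℝ} (hγ : 0 < γ) (F0 Fγ : Measure ℝ) [IsProbabilityMeasure F0]
    [IsProbabilityMeasure Fγ] (hs : F0 (Iio 0) = 0)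
    (ht : ∀ x : ℝ, 0 ≤ x → tail Fγ x = Real.exp (-(γ * x)) * tail F0 x) {x : ℝ} (hx : 0 ≤ x) :
    |tail (mconv Fγ Fγ) x - γ * Real.exp (-(γ * x)) * ∫ y in Ioc 0 x, tail F0 (x - y) * tail F0 y|
      ≤ Real.exp (-(γ * x)) * (3 * tail F0 x + tail (mconv F0 F0) x) := by
  haveI := expM_prob γ hγ
  haveI := nuM_prob hγ F0
  haveI : IsProbabilityMeasure (mconv F0 F0) := by
    rw [mconv]; exact Measure.isProbabilityMeasure_map measurable_add.aemeasurable
  set ν := nuM γ F0 with hν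
  have htail_eq : ∀ t : ℝ, 0 ≤ t → Fγ (Ioi t) = ν (Ioi t) := by
    intro t htt
    rw [tail_ofReal Fγ t, ht t htt, ENNReal.ofReal_mul (Real.exp_nonneg _), ← tail_ofReal F0 t,
      hν, nuM_Ioi hγ F0 htt, mul_comm]
  have hres : Fγ.restrict (Ioi 0) = ν.restrict (Ioi 0) := restrict_eq_of_tail _ _ htail_eq
  have hcore : ∀ μ : Measure ℝ, (∫⁻ y in Ioi 0, μ (Ioi (x - y) ∩ Ioi 0) ∂μ) =
      ∫⁻ y, μ.restrict (Ioi 0) (Ioi (x - y)) ∂(μ.restrict (Ioi 0)) := fun μ => by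
    simp only [Measure.restrict_apply measurableSet_Ioi]
  have hcoreeq : (∫⁻ y in Ioi 0, Fγ (Ioi (x - y) ∩ Ioi 0) ∂Fγ) =
      ∫⁻ y in Ioi 0, ν (Ioi (x - y) ∩ Ioi 0) ∂ν := by
    rw [hcore Fγ, hcore ν, hres]
  have hsF := core_sandwich Fγ (x := x) hx
  have hsν := core_sandwich ν (x := x) hx
  have hnu := nuM_conv_sandwich hγ F0 hs hx
  have hB : Fγ (Ioi x) = ENNReal.ofReal (Real.exp (-(γ * x))) * F0 (Ioi x) := by
    rw [htail_eq x hx, hν, nuM_Ioi hγ F0 hx, mul_comm]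
  have hBν : ν (Ioi x) = ENNReal.ofReal (Real.exp (-(γ * x))) * F0 (Ioi x) := by
    rw [hν, nuM_Ioi hγ F0 hx, mul_comm]
  set G := Gfun γ F0 x with hG
  set T := ∫⁻ y, Fγ (Ioi (x - y)) ∂Fγ with hT
  set Tν := ∫⁻ y, ν (Ioi (x - y)) ∂ν with hTν
  set Err : ENNReal := ENNReal.ofReal (Real.exp (-(γ * x))) *
    (3 * F0 (Ioi x) + mconv F0 F0 (Ioi x)) with hErr
  have herr2 : 2 * Fγ (Ioi x) + ENNReal.ofReal (Real.exp (-(γ * x))) *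
      (mconv F0 F0 (Ioi x) + F0 (Ioi x)) = Err := by
    rw [hB, hErr]; ring
  have hup : T ≤ G + Err := by
    calc T ≤ (∫⁻ y in Ioi 0, Fγ (Ioi (x - y) ∩ Ioi 0) ∂Fγ) + 2 * Fγ (Ioi x) := hsF.2
      _ = (∫⁻ y in Ioi 0, ν (Ioi (x - y) ∩ Ioi 0) ∂ν) + 2 * Fγ (Ioi x) := by rw [hcoreeq]
      _ ≤ Tν + 2 * Fγ (Ioi x) := add_le_add hsν.1 le_rfl
      _ ≤ (G + ENNReal.ofReal (Real.exp (-(γ * x))) * (mconv F0 F0 (Ioi x) + F0 (Ioi x)))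
            + 2 * Fγ (Ioi x) := add_le_add hnu.2 le_rfl
      _ = G + Err := by rw [← herr2]; ring
  have hlow : G ≤ T + Err := by
    calc G ≤ Tν := hnu.1
      _ ≤ (∫⁻ y in Ioi 0, ν (Ioi (x - y) ∩ Ioi 0) ∂ν) + 2 * ν (Ioi x) := hsν.2
      _ = (∫⁻ y in Ioi 0, Fγ (Ioi (x - y) ∩ Ioi 0) ∂Fγ) + 2 * Fγ (Ioi x) := by
          rw [hcoreeq, hBν, hB]
      _ ≤ T + 2 * Fγ (Ioi x) := add_le_add hsF.1 le_rfl
      _ ≤ T + Err := by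
          refine add_le_add le_rfl ?_
          rw [← herr2]
          exact le_self_add
  -- finiteness
  have hTne : T ≠ ⊤ := by
    rw [hT, ← mconv_Ioi]
    haveI : IsProbabilityMeasure (mconv Fγ Fγ) := by
      rw [mconv]; exact Measure.isProbabilityMeasure_map measurable_add.aemeasurable
    exact measure_ne_top _ _
  have hGne : G ≠ ⊤ := by
    rw [hG, Gfun_eq hγ F0 hx]; exact ENNReal.ofReal_ne_top
  have hErrne : Err ≠ ⊤ := by
    rw [hErr]
    refine ENNReal.mul_ne_top ENNReal.ofReal_ne_top (ENNReal.add_ne_top.2 ⟨?_, measure_ne_top _ _⟩)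
    exact ENNReal.mul_ne_top (by simp) (measure_ne_top _ _)
  -- pass to real numbers
  have hTtr : tail (mconv Fγ Fγ) x = T.toReal := by rw [tail, mconv_Ioi]
  have hGtr : G.toReal = γ * Real.exp (-(γ * x)) * ∫ y in Ioc 0 x, tail F0 (x - y) * tail F0 y := by
    rw [hG, Gfun_eq hγ F0 hx, ENNReal.toReal_ofReal]
    refine mul_nonneg (by positivity) (setIntegral_nonneg measurableSet_Ioc fun y _ =>
      mul_nonneg (tail_nonneg _ _) (tail_nonneg _ _))
  have hErrtr : Err.toReal = Real.exp (-(γ * x)) * (3 * tail F0 x + tail (mconv F0 F0) x) := by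
    rw [hErr, ENNReal.toReal_mul, ENNReal.toReal_ofReal (Real.exp_nonneg _), ENNReal.toReal_add
      (ENNReal.mul_ne_top (by simp) (measure_ne_top _ _)) (measure_ne_top _ _),
      ENNReal.toReal_mul]
    norm_num
    rfl
  have h1 : T.toReal ≤ G.toReal + Err.toReal := by
    rw [← ENNReal.toReal_add hGne hErrne]
    exact ENNReal.toReal_mono (ENNReal.add_ne_top.2 ⟨hGne, hErrne⟩) hup
  have h2 : G.toReal ≤ T.toReal + Err.toReal := by
    rw [← ENNReal.toReal_add hTne hErrne]
    exact ENNReal.toReal_mono (ENNReal.add_ne_top.2 ⟨hTne, hErrne⟩) hlow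
  rw [hTtr, ← hGtr, ← hErrtr, abs_sub_le_iff]
  constructor <;> linarith

lemma tail_pos (F0 : Measure ℝ) [IsProbabilityMeasure F0]
    (hdiv : Filter.Tendsto (fun x : ℝ => ∫ y in Set.Ioc 0 x, tail F0 y)
      Filter.atTop Filter.atTop) (z : ℝ) : 0 < tail F0 z := by
  rcases lt_or_ge 0 (tail F0 z) with h | h
  · exact h
  exfalso
  have eq0 : tail F0 z = 0 := le_antisymm h (tail_nonneg _ _)
  set z' := max z 0 with hz'def
  have hz' : tail F0 z' = 0 :=
    le_antisymm (eq0 ▸ tail_anti F0 (le_max_left z 0)) (tail_nonneg _ _)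
  have hconst : ∀ x : ℝ, z' ≤ x → (∫ y in Ioc 0 x, tail F0 y) = ∫ y in Ioc 0 z', tail F0 y := by
    intro x hxz
    rw [← Ioc_union_Ioc_eq_Ioc (le_max_right z 0) hxz,
      setIntegral_union (Ioc_disjoint_Ioc_of_le le_rfl) measurableSet_Ioc (integrableOn_tail F0 0 z')
        (integrableOn_tail F0 z' x)]
    have hzero : ∀ y ∈ Ioc z' x, tail F0 y = 0 := fun y hy =>
      le_antisymm (hz' ▸ tail_anti F0 (le_of_lt (mem_Ioc.1 hy).1)) (tail_nonneg _ _)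
    rw [setIntegral_congr_fun measurableSet_Ioc hzero]
    simp
  have h1 : ∀ᶠ x : ℝ in atTop, (∫ y in Ioc 0 z', tail F0 y) + 1 ≤ ∫ y in Ioc 0 x, tail F0 y :=
    hdiv.eventually_ge_atTop _
  have h2 : ∀ᶠ x : ℝ in atTop, z' ≤ x := eventually_ge_atTop z'
  rcases (h1.and h2).exists with ⟨x, hx1, hx2⟩
  rw [hconst x hx2] at hx1
  linarith

theorem stmt15 (γ : ℝ) (hγ : 0 < γ) (F0 Fγ : Measure ℝ)
    [IsProbabilityMeasure F0] [IsProbabilityMeasure Fγ]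
    (hs : F0 (Set.Iio 0) = 0) (hOS : MemOS F0)
    (hdiv : Filter.Tendsto (fun x : ℝ => ∫ y in Set.Ioc 0 x, tail F0 y)
      Filter.atTop Filter.atTop)
    (ht : ∀ x : ℝ, 0 ≤ x → tail Fγ x = Real.exp (-(γ * x)) * tail F0 x) :
    (fun x => tail (mconv Fγ Fγ) x) ~[Filter.atTop]
      fun x => γ * Real.exp (-(γ * x)) * ∫ y in Set.Ioc 0 x, tail F0 (x - y) * tail F0 y := by
  have hpos := tail_pos F0 hdiv
  obtain ⟨C, hC⟩ := hOS
  rw [Filter.eventually_map] at hC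
  have hconv : ∀ᶠ x in atTop, tail (mconv F0 F0) x ≤ C * tail F0 x := by
    filter_upwards [hC] with x hx
    rw [div_le_iff₀ (hpos x)] at hx
    linarith
  set K := 3 + max C 0 with hK
  have hKpos : 0 < K := by
    have := le_max_right C 0
    rw [hK]; linarith
  refine Asymptotics.isLittleO_iff.mpr fun c hc => ?_
  have hI : ∀ᶠ x : ℝ in atTop, K / (γ * c) ≤ ∫ y in Ioc 0 x, tail F0 y :=
    hdiv.eventually_ge_atTop _
  filter_upwards [eventually_ge_atTop (0 : ℝ), hconv, hI] with x hx hcv hIx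
  have hkey := key_bound hγ F0 Fγ hs ht hx
  set I := ∫ y in Ioc 0 x, tail F0 y with hIdef
  set v := γ * Real.exp (-(γ * x)) * ∫ y in Ioc 0 x, tail F0 (x - y) * tail F0 y with hv
  have hInn : tail F0 x * I ≤ ∫ y in Ioc 0 x, tail F0 (x - y) * tail F0 y := by
    rw [hIdef, ← integral_const_mul]
    refine setIntegral_mono_on ((integrableOn_tail F0 0 x).const_mul _)
      (integrable_tail_prod F0 x) measurableSet_Ioc fun y hy => ?_
    rcases mem_Ioc.1 hy with ⟨hy1, hy2⟩
    exact mul_le_mul_of_nonneg_right (tail_anti F0 (by linarith)) (tail_nonneg _ _)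
  have hvnn : 0 ≤ v := mul_nonneg (by positivity)
    (setIntegral_nonneg measurableSet_Ioc fun y _ =>
      mul_nonneg (tail_nonneg _ _) (tail_nonneg _ _))
  rw [Pi.sub_apply, Real.norm_eq_abs, Real.norm_eq_abs, abs_of_nonneg hvnn]
  have hErrle : Real.exp (-(γ * x)) * (3 * tail F0 x + tail (mconv F0 F0) x) ≤
      K * (Real.exp (-(γ * x)) * tail F0 x) := by
    have h1 : tail (mconv F0 F0) x ≤ max C 0 * tail F0 x :=
      hcv.trans (mul_le_mul_of_nonneg_right (le_max_left _ _) (hpos x).le)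
    calc Real.exp (-(γ * x)) * (3 * tail F0 x + tail (mconv F0 F0) x)
        ≤ Real.exp (-(γ * x)) * ((3 + max C 0) * tail F0 x) :=
          mul_le_mul_of_nonneg_left (by linarith) (Real.exp_nonneg _)
      _ = K * (Real.exp (-(γ * x)) * tail F0 x) := by rw [hK]; ring
  have hKc : K ≤ c * (γ * I) := by
    rw [div_le_iff₀ (by positivity : (0:ℝ) < γ * c)] at hIx
    nlinarith
  calc |tail (mconv Fγ Fγ) x - v| ≤
      Real.exp (-(γ * x)) * (3 * tail F0 x + tail (mconv F0 F0) x) := hkey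
    _ ≤ K * (Real.exp (-(γ * x)) * tail F0 x) := hErrle
    _ ≤ c * (γ * I) * (Real.exp (-(γ * x)) * tail F0 x) :=
        mul_le_mul_of_nonneg_right hKc
          (mul_nonneg (Real.exp_nonneg _) (tail_nonneg _ _))
    _ ≤ c * v := by
        have h2 : γ * Real.exp (-(γ * x)) * (tail F0 x * I) ≤ v :=
          mul_le_mul_of_nonneg_left hInn (by positivity)
        calc c * (γ * I) * (Real.exp (-(γ * x)) * tail F0 x)
            = c * (γ * Real.exp (-(γ * x)) * (tail F0 x * I)) := by ring
          _ ≤ c * v := mul_le_mul_of_nonneg_left h2 hc.le
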